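/- Let $x\in\mathbb{R}^n$, $x\neq 0$, $y\in\mathbb{R}$, $c>0$, $r^2=|x|^2c^4+y^2$ with $y\neq 0$. Define the $n\times(n+1)$ matrix $A'=\left(I-\frac{1-|y|/r}{|x|^2}xx^\top,\ -\frac{c^2}{r|y|}xy\right)$. Then $A'A'^\top=I_n$. -/

import Mathlib

theorem stmt_14 (n : ℕ) (c : ℝ) (hc : 0 < c) (x : EuclideanSpace ℝ (Fin n)) (y : ℝ)
    (hx : x ≠ 0) (hy : y ≠ 0)
    (r : ℝ) (hrpos : 0 < r) (hr : r ^ 2 = ‖x‖ ^ 2 * c ^ 4 + y ^ 2)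
    (A' : Matrix (Fin n) (Fin (n + 1)) ℝ)
    (hA' : ∀ (i : Fin n) (j : Fin (n + 1)), A' i j =
      if h : (j : ℕ) < n then
        (if i = ⟨j, h⟩ then 1 else 0) - ((1 - |y| / r) / ‖x‖ ^ 2) * x i * x ⟨j, h⟩
      else -(c ^ 2 / (r * |y|)) * x i * y) :
    A' * A'.transpose = 1 := by
  have hnx : 0 < ‖x‖ := norm_pos_iff.mpr hx
  set s : ℝ := ‖x‖ ^ 2 with hs
  have hspos : 0 < s := by positivity
  have hsum : ∑ j : Fin n, x j ^ 2 = s := by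
    rw [hs, EuclideanSpace.norm_eq, Real.sq_sqrt (by positivity)]
    simp [sq_abs]
  set a : ℝ := (1 - |y| / r) / s with ha
  have hy2 : |y| ^ 2 = y ^ 2 := sq_abs y
  have hyabs : 0 < |y| := abs_pos.mpr hy
  have key : a ^ 2 * s - 2 * a + c ^ 4 / r ^ 2 = 0 := by
    rw [ha]
    field_simp
    ring_nf
    linear_combination hy2 - hr
  have hlast : ∀ u v : ℝ,
      -(c ^ 2 / (r * |y|)) * u * y * (-(c ^ 2 / (r * |y|)) * v * y)
        = c ^ 4 / r ^ 2 * (u * v) := by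
    intro u v
    field_simp
    ring_nf
    linear_combination (-(u * v)) * hy2
  ext i k
  rw [Matrix.mul_apply]
  simp only [Matrix.transpose_apply, hA']
  rw [Fin.sum_univ_castSucc]
  simp only [Fin.coe_castSucc, Fin.is_lt, dif_pos, Fin.val_last, lt_irrefl, dite_false, Fin.eta]
  have expand : ∀ j : Fin n,
      ((if i = j then (1:ℝ) else 0) - a * x i * x j) * ((if k = j then 1 else 0) - a * x k * x j)
      = (if i = j then (1:ℝ) else 0) * (if k = j then 1 else 0)
        - a * x k * ((if i = j then (1:ℝ) else 0) * x j)
        - a * x i * ((if k = j then (1:ℝ) else 0) * x j)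
        + a ^ 2 * x i * x k * x j ^ 2 := by
    intro j; ring
  rw [Finset.sum_congr rfl fun j _ => expand j]
  simp only [Finset.sum_add_distrib, Finset.sum_sub_distrib, ← Finset.mul_sum, ite_mul, one_mul,
    zero_mul, Finset.sum_ite_eq, Finset.mem_univ, if_true, hsum]
  rw [Matrix.one_apply, hlast]
  by_cases hik : i = k
  · subst hik
    simp only [if_pos rfl]
    nlinarith [key, sq_nonneg (x i)]
  · simp only [if_neg hik, if_neg (Ne.symm hik)]
    nlinarith [key, sq_nonneg (x i + x k), sq_nonneg (x i - x k)]
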